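/- Let a = a_1⋯a_k ∈ {0,1}^k and b = b_1⋯b_j ∈ {0,1}^j be two finite binary words. Then N(a) = N(b) if and only if X(a) = X(b). -/
import Mathlib


open Real Finset

noncomputable section

/-- The golden mean φ = (1+√5)/2. -/
def phi : ℝ := (1 + Real.sqrt 5) / 2

/-- ψ = (1−√5)/2 = −1/φ. -/
def psi : ℝ := (1 - Real.sqrt 5) / 2

/-- A word `a : Fin k → ℕ` is binary if all its letters are 0 or 1. -/
def IsBin {k : ℕ} (a : Fin k → ℕ) : Prop := ∀ i, a i ≤ 1

/-- N(a) = ∑_{i=1}^k a_i F_{k+2−i}  (here `i : Fin k` corresponds to `i+1`). -/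
def Nw {k : ℕ} (a : Fin k → ℕ) : ℕ := ∑ i : Fin k, a i * Nat.fib (k + 1 - (i : ℕ))

/-- X(a) = ∑_{i=1}^k a_i φ^{k+2−i}. -/
def Xw {k : ℕ} (a : Fin k → ℕ) : ℝ := ∑ i : Fin k, (a i : ℝ) * phi ^ (k + 1 - (i : ℕ))

/-- Y(a) = ∑_{i=1}^k a_i ψ^{k+2−i}. -/
def Yw {k : ℕ} (a : Fin k → ℕ) : ℝ := ∑ i : Fin k, (a i : ℝ) * psi ^ (k + 1 - (i : ℕ))

lemma sqrt5_sq : Real.sqrt 5 * Real.sqrt 5 = 5 := Real.mul_self_sqrt (by norm_num)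
lemma sqrt5_gt : 2 < Real.sqrt 5 := by nlinarith [sqrt5_sq, Real.sqrt_nonneg 5]
lemma sqrt5_lt : Real.sqrt 5 < 3 := by nlinarith [sqrt5_sq, Real.sqrt_nonneg 5]

lemma phi_sq : phi ^ 2 = phi + 1 := by
  unfold phi; field_simp; nlinarith [sqrt5_sq]

lemma psi_sq : psi ^ 2 = psi + 1 := by
  unfold psi; field_simp; nlinarith [sqrt5_sq]

lemma psi_neg : psi < 0 := by unfold psi; nlinarith [sqrt5_gt]
lemma psi_gt : -1 < psi := by unfold psi; nlinarith [sqrt5_lt]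

lemma phi_pow (n : ℕ) : phi ^ (n + 1) = Nat.fib (n + 1) * phi + Nat.fib n := by
  induction n with
  | zero => simp
  | succ n ih =>
    have h : phi ^ (n + 2) = phi ^ (n + 1) * phi := by ring
    rw [h, ih, Nat.fib_add_two]
    push_cast
    linear_combination (Nat.fib (n + 1) : ℝ) * phi_sq

lemma psi_pow (n : ℕ) : psi ^ (n + 1) = Nat.fib (n + 1) * psi + Nat.fib n := by
  induction n with
  | zero => simp
  | succ n ih =>
    have h : psi ^ (n + 2) = psi ^ (n + 1) * psi := by ring
    rw [h, ih, Nat.fib_add_two]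
    push_cast
    linear_combination (Nat.fib (n + 1) : ℝ) * psi_sq

/-- M(a) = ∑_{i=1}^k a_i F_{k+1−i}, the "shifted" Fibonacci value of a word. -/
def Mw {k : ℕ} (a : Fin k → ℕ) : ℕ := ∑ i : Fin k, a i * Nat.fib (k - (i : ℕ))

lemma Xw_eq {k : ℕ} (a : Fin k → ℕ) : Xw a = (Nw a : ℝ) * phi + Mw a := by
  unfold Xw Nw Mw
  push_cast
  rw [Finset.sum_mul, ← Finset.sum_add_distrib]
  apply Finset.sum_congr rfl
  intro i _
  have h1 : k + 1 - (i : ℕ) = (k - (i : ℕ)) + 1 := by omega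
  rw [h1, phi_pow (k - (i : ℕ))]
  ring

lemma Yw_eq {k : ℕ} (a : Fin k → ℕ) : Yw a = (Nw a : ℝ) * psi + Mw a := by
  unfold Yw Nw Mw
  push_cast
  rw [Finset.sum_mul, ← Finset.sum_add_distrib]
  apply Finset.sum_congr rfl
  intro i _
  have h1 : k + 1 - (i : ℕ) = (k - (i : ℕ)) + 1 := by omega
  rw [h1, psi_pow (k - (i : ℕ))]
  ring

lemma Yw_bounds : ∀ (k : ℕ) (a : Fin k → ℕ), IsBin a → -(psi + 1) < Yw a ∧ Yw a < -psi := by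
  intro k
  induction k with
  | zero =>
    intro a _
    simp only [Yw, Finset.univ_eq_empty, Finset.sum_empty]
    constructor <;> nlinarith [psi_neg, psi_gt]
  | succ k ih =>
    intro a ha
    have hrec : Yw a = psi * Yw (fun i : Fin k => a i.castSucc)
        + (a (Fin.last k) : ℝ) * psi ^ 2 := by
      unfold Yw
      rw [Fin.sum_univ_castSucc, Finset.mul_sum]
      simp only [Fin.coe_castSucc, Fin.val_last]
      have h2 : k + 1 + 1 - k = 2 := by omega
      rw [h2]
      congr 1
      apply Finset.sum_congr rfl
      intro i _
      have h3 : k + 1 + 1 - (i : ℕ) = (k + 1 - (i : ℕ)) + 1 := by omega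
      rw [h3]
      ring
    obtain ⟨h1, h2⟩ := ih (fun i => a i.castSucc) (fun i => ha _)
    have hb := ha (Fin.last k)
    have hm1 := mul_lt_mul_of_neg_left h1 psi_neg
    have hm2 := mul_lt_mul_of_neg_left h2 psi_neg
    interval_cases h : a (Fin.last k) <;>
      push_cast at hrec <;>
      constructor <;>
      nlinarith [psi_sq, psi_neg, psi_gt]

lemma irrational_sqrt5 : Irrational (Real.sqrt 5) := by
  have := Nat.Prime.irrational_sqrt (p := 5) (by norm_num)
  simpa using this

/-- for binary words a, b, N(a) = N(b) iff X(a) = X(b). -/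
theorem stmt_0 {k j : ℕ} (a : Fin k → ℕ) (b : Fin j → ℕ)
    (ha : IsBin a) (hb : IsBin b) :
    Nw a = Nw b ↔ Xw a = Xw b := by
  have hXa := Xw_eq a
  have hXb := Xw_eq b
  have hYa := Yw_eq a
  have hYb := Yw_eq b
  obtain ⟨hBa1, hBa2⟩ := Yw_bounds k a ha
  obtain ⟨hBb1, hBb2⟩ := Yw_bounds j b hb
  constructor
  · intro h
    have hM : Mw a = Mw b := by
      have hd : ((Mw a : ℤ) - Mw b : ℝ) = Yw a - Yw b := by
        push_cast
        rw [hYa, hYb, h]; ring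
      have h1 : ((Mw a : ℤ) - Mw b : ℝ) < 1 := by rw [hd]; linarith
      have h2 : (-1 : ℝ) < ((Mw a : ℤ) - Mw b : ℝ) := by rw [hd]; linarith
      have h1' : (Mw a : ℤ) - Mw b < 1 := by exact_mod_cast h1
      have h2' : (-1 : ℤ) < (Mw a : ℤ) - Mw b := by exact_mod_cast h2
      omega
    rw [hXa, hXb, h, hM]
  · intro h
    by_contra hne
    set d : ℤ := (Nw a : ℤ) - Nw b with hd
    set e : ℤ := (Mw b : ℤ) - Mw a with he
    have hdne : d ≠ 0 := by
      simp only [hd, sub_ne_zero]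
      exact_mod_cast hne
    have hkey : (d : ℝ) * phi = e := by
      rw [hXa, hXb] at h
      push_cast [hd, he]
      linarith
    have hdR : (d : ℝ) ≠ 0 := Int.cast_ne_zero.mpr hdne
    have hs : Real.sqrt 5 = ((2 * e - d : ℤ) : ℝ) / d := by
      unfold phi at hkey
      push_cast
      field_simp
      field_simp at hkey
      linarith
    exact irrational_sqrt5 ⟨(2 * e - d : ℤ) / (d : ℤ), by push_cast [hs]; norm_num⟩

end
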